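/- The universal conditional probability converges to the true conditional probability in mean square: lim_{t→∞} ∑_{x_{1:t} ∈ {0,1}^t} μ(x_{<t}) (μ(x_t|x_{<t}) − ξ(x_t|x_{<t}))² = 0, where terms with μ(x_{<t}) = 0 are taken to be 0. -/

import Mathlib

open Finset Filter

lemma ofFnSnoc {n : ℕ} (x : Fin n → Bool) (b : Bool) :
    List.ofFn (Fin.snoc x b) = List.ofFn x ++ [b] := by
  rw [List.ofFn_succ']
  simp [List.concat_eq_append]

lemma sum_succ_eq (n : ℕ) (f : List Bool → ℝ) :
    ∑ y : Fin (n+1) → Bool, f (List.ofFn y)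
      = ∑ x : Fin n → Bool, ∑ b : Bool, f (List.ofFn x ++ [b]) := by
  rw [← (Fin.snocEquiv (fun _ : Fin (n+1) => Bool)).sum_comp (fun y => f (List.ofFn y))]
  rw [Fintype.sum_prod_type]
  rw [Finset.sum_comm]
  refine Finset.sum_congr rfl fun x _ => Finset.sum_congr rfl fun b _ => ?_
  have : (Fin.snocEquiv (fun _ : Fin (n+1) => Bool)) (b, x) = Fin.snoc x b := by
    ext i; simp [Fin.snocEquiv]
  rw [this, ofFnSnoc]


/-- A probability distribution on finite binary strings:
nonnegative, `1` on the empty string, and additive under one-symbol extension. -/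
def IsDistr (ρ : List Bool → ℝ) : Prop :=
  (∀ x, 0 ≤ ρ x) ∧ ρ [] = 1 ∧
    ∀ x, ρ x = ρ (x ++ [false]) + ρ (x ++ [true])

/-- Conditional probability `ρ(b | x) = ρ(xb)/ρ(x)` (junk `0` when `ρ x = 0`). -/
noncomputable def condP (ρ : List Bool → ℝ) (x : List Bool) (b : Bool) : ℝ :=
  ρ (x ++ [b]) / ρ x

/-- Instantaneous relative entropy
`h_t(x) = ∑_b μ(b|x) ln (μ(b|x)/ξ(b|x))` (conventions `0·ln 0 = 0` are automatic
since `Real.log 0 = 0` and `r/0 = 0`). -/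
noncomputable def instEnt (μ ξ : List Bool → ℝ) (x : List Bool) : ℝ :=
  ∑ b : Bool, condP μ x b * Real.log (condP μ x b / condP ξ x b)

/-- Total relative entropy `H_n = ∑_{t=1}^n ∑_{x_{<t}} μ(x_{<t}) h_t(x_{<t})`
(histories of length `t-1`, i.e. length `t ∈ {0,…,n-1}`). -/
noncomputable def totalEnt (μ ξ : List Bool → ℝ) (n : ℕ) : ℝ :=
  ∑ t ∈ Finset.range n, ∑ x : Fin t → Bool,
    μ (List.ofFn x) * instEnt μ ξ (List.ofFn x)

/-- `ρ`-expected loss of predicting `y` after history `x`. -/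
noncomputable def expLoss (ρ : List Bool → ℝ) (l : Bool → Bool → ℝ)
    (x : List Bool) (y : Bool) : ℝ :=
  ∑ b : Bool, condP ρ x b * l b y

/-- `Y` is a fixed choice of minimizers for the scheme `Λ_ρ`. -/
def IsPredictor (ρ : List Bool → ℝ) (l : Bool → Bool → ℝ)
    (Y : List Bool → Bool) : Prop :=
  ∀ x y, expLoss ρ l x (Y x) ≤ expLoss ρ l x y

/-- Total `μ`-expected loss `L_{nΛ}` of the scheme with minimizers `Y`. -/
noncomputable def totalLoss (μ : List Bool → ℝ) (l : Bool → Bool → ℝ)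
    (Y : List Bool → Bool) (n : ℕ) : ℝ :=
  ∑ t ∈ Finset.range n, ∑ x : Fin t → Bool,
    μ (List.ofFn x) * expLoss μ l (List.ofFn x) (Y (List.ofFn x))

set_option maxHeartbeats 1000000 in
/-- Binary Pinsker-type inequality with constant 4. -/
lemma pinsker4 {p0 p1 q0 q1 : ℝ} (hp0 : 0 ≤ p0) (hp1 : 0 ≤ p1) (hq0 : 0 ≤ q0) (hq1 : 0 ≤ q1)
    (hps : p0 + p1 = 1) (hqs : q0 + q1 = 1) (h0 : 0 < p0 → 0 < q0) (h1 : 0 < p1 → 0 < q1) :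
    (p0 - q0) ^ 2 + (p1 - q1) ^ 2 ≤
      4 * (p0 * Real.log (p0 / q0) + p1 * Real.log (p1 / q1)) := by
  -- square roots
  set s0 := Real.sqrt p0 with hs0
  set s1 := Real.sqrt p1 with hs1
  set t0 := Real.sqrt q0 with ht0
  set t1 := Real.sqrt q1 with ht1
  have hs0sq : s0 ^ 2 = p0 := Real.sq_sqrt hp0
  have hs1sq : s1 ^ 2 = p1 := Real.sq_sqrt hp1
  have ht0sq : t0 ^ 2 = q0 := Real.sq_sqrt hq0
  have ht1sq : t1 ^ 2 = q1 := Real.sq_sqrt hq1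
  have hs0nn : 0 ≤ s0 := Real.sqrt_nonneg _
  have hs1nn : 0 ≤ s1 := Real.sqrt_nonneg _
  have ht0nn : 0 ≤ t0 := Real.sqrt_nonneg _
  have ht1nn : 0 ≤ t1 := Real.sqrt_nonneg _
  have hs0le : s0 ≤ 1 := by rw [hs0, show (1:ℝ) = Real.sqrt 1 by simp]; exact Real.sqrt_le_sqrt (by linarith)
  have hs1le : s1 ≤ 1 := by rw [hs1, show (1:ℝ) = Real.sqrt 1 by simp]; exact Real.sqrt_le_sqrt (by linarith)
  have ht0le : t0 ≤ 1 := by rw [ht0, show (1:ℝ) = Real.sqrt 1 by simp]; exact Real.sqrt_le_sqrt (by linarith)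
  have ht1le : t1 ≤ 1 := by rw [ht1, show (1:ℝ) = Real.sqrt 1 by simp]; exact Real.sqrt_le_sqrt (by linarith)
  set B : ℝ := s0 * t0 + s1 * t1 with hB
  have hBle : B ≤ 1 := by nlinarith [sq_nonneg (s0 - t0), sq_nonneg (s1 - t1)]
  -- the squared-difference bound via B
  have hsq : (p0 - q0) ^ 2 + (p1 - q1) ^ 2 ≤ 4 * (2 - 2 * B) := by
    have e0 : (p0 - q0) ^ 2 = (s0 - t0) ^ 2 * (s0 + t0) ^ 2 := by
      rw [← hs0sq, ← ht0sq]; ring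
    have e1 : (p1 - q1) ^ 2 = (s1 - t1) ^ 2 * (s1 + t1) ^ 2 := by
      rw [← hs1sq, ← ht1sq]; ring
    have b0 : (s0 - t0) ^ 2 * (s0 + t0) ^ 2 ≤ 4 * (s0 - t0) ^ 2 := by
      nlinarith [sq_nonneg (s0 - t0)]
    have b1 : (s1 - t1) ^ 2 * (s1 + t1) ^ 2 ≤ 4 * (s1 - t1) ^ 2 := by
      nlinarith [sq_nonneg (s1 - t1)]
    have hBexp : (s0 - t0) ^ 2 + (s1 - t1) ^ 2 = 2 - 2 * B := by
      have : (s0 - t0) ^ 2 + (s1 - t1) ^ 2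
          = (s0 ^ 2 + s1 ^ 2) + (t0 ^ 2 + t1 ^ 2) - 2 * B := by rw [hB]; ring
      rw [this, hs0sq, hs1sq, ht0sq, ht1sq]; linarith
    rw [e0, e1]; linarith [b0, b1]
  -- the entropy bound via B
  set KL : ℝ := p0 * Real.log (p0 / q0) + p1 * Real.log (p1 / q1) with hKLdef
  have hBpos : 0 < B := by
    rcases lt_or_ge 0 p0 with h | h
    · have hq := h0 h
      have h2 : 0 < s0 * t0 := mul_pos (Real.sqrt_pos.2 h) (Real.sqrt_pos.2 hq)
      have h3 := mul_nonneg hs1nn ht1nn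
      rw [hB]; linarith
    · have hp0z : p0 = 0 := le_antisymm h hp0
      have hp1one : 0 < p1 := by linarith
      have hq := h1 hp1one
      have h2 : 0 < s1 * t1 := mul_pos (Real.sqrt_pos.2 hp1one) (Real.sqrt_pos.2 hq)
      have h3 := mul_nonneg hs0nn ht0nn
      rw [hB]; linarith
  have key : -(2 * Real.log B) ≤ KL := by
    rcases eq_or_lt_of_le hp0 with h0z | h0p
    · -- p0 = 0, p1 = 1
      have hp1e : p1 = 1 := by linarith
      have hq1p : 0 < q1 := h1 (by linarith)
      have hBeq : B = t1 := by
        rw [hB, hs0, ← h0z, hs1, hp1e]; simp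
      rw [hKLdef, ← h0z, hp1e, hBeq, ht1, Real.log_sqrt hq1, one_div, Real.log_inv]
      simp
      linarith only []
    · rcases eq_or_lt_of_le hp1 with h1z | h1p
      · -- p1 = 0, p0 = 1
        have hp0e : p0 = 1 := by linarith
        have hq0p : 0 < q0 := h0 (by linarith)
        have hBeq : B = t0 := by
          rw [hB, hs1, ← h1z, hs0, hp0e]; simp
        rw [hKLdef, ← h1z, hp0e, hBeq, ht0, Real.log_sqrt hq0, one_div, Real.log_inv]
        simp
        linarith only []
      · -- both positive
        have hq0p : 0 < q0 := h0 h0p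
        have hq1p : 0 < q1 := h1 h1p
        have hr0 : 0 < q0 / p0 := div_pos hq0p h0p
        have hr1 : 0 < q1 / p1 := div_pos hq1p h1p
        have hg := Real.geom_mean_le_arith_mean2_weighted hp0 hp1
          (Real.sqrt_nonneg (q0 / p0)) (Real.sqrt_nonneg (q1 / p1)) hps
        have e0 : p0 * Real.sqrt (q0 / p0) = s0 * t0 := by
          rw [Real.sqrt_div hq0, hs0, ht0]
          calc p0 * (Real.sqrt q0 / Real.sqrt p0)
              = p0 / Real.sqrt p0 * Real.sqrt q0 := by ring
            _ = Real.sqrt p0 * Real.sqrt q0 := by rw [Real.div_sqrt]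
        have e1 : p1 * Real.sqrt (q1 / p1) = s1 * t1 := by
          rw [Real.sqrt_div hq1, hs1, ht1]
          calc p1 * (Real.sqrt q1 / Real.sqrt p1)
              = p1 / Real.sqrt p1 * Real.sqrt q1 := by ring
            _ = Real.sqrt p1 * Real.sqrt q1 := by rw [Real.div_sqrt]
        set L : ℝ := Real.sqrt (q0 / p0) ^ p0 * Real.sqrt (q1 / p1) ^ p1 with hLdef
        have hL0 : 0 < Real.sqrt (q0 / p0) ^ p0 := Real.rpow_pos_of_pos (Real.sqrt_pos.2 hr0) _
        have hL1 : 0 < Real.sqrt (q1 / p1) ^ p1 := Real.rpow_pos_of_pos (Real.sqrt_pos.2 hr1) _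
        have hLpos : 0 < L := mul_pos hL0 hL1
        have hLB : L ≤ B := by
          rw [hB, ← e0, ← e1]; exact hg
        have hlogL : Real.log L
            = p0 * (Real.log (q0 / p0) / 2) + p1 * (Real.log (q1 / p1) / 2) := by
          rw [hLdef, Real.log_mul (ne_of_gt hL0) (ne_of_gt hL1),
            Real.log_rpow (Real.sqrt_pos.2 hr0), Real.log_rpow (Real.sqrt_pos.2 hr1),
            Real.log_sqrt hr0.le, Real.log_sqrt hr1.le]
        have hinv0 : Real.log (q0 / p0) = -Real.log (p0 / q0) := by
          rw [← Real.log_inv, inv_div]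
        have hinv1 : Real.log (q1 / p1) = -Real.log (p1 / q1) := by
          rw [← Real.log_inv, inv_div]
        have hLK : Real.log L = -(KL / 2) := by
          rw [hlogL, hinv0, hinv1, hKLdef]; ring
        have hfin := Real.log_le_log hLpos hLB
        rw [hLK] at hfin
        clear_value B KL L s0 s1 t0 t1
        linarith only [hfin]
  have hlogB : Real.log B ≤ B - 1 := Real.log_le_sub_one_of_pos hBpos
  linarith only [hsq, key, hlogB]


/-- Per-history telescoping identity for the instantaneous entropy. -/
lemma step_eq (μ ξ : List Bool → ℝ) (hμnn : ∀ y, 0 ≤ μ y)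
    (hμadd : ∀ y, μ y = μ (y ++ [false]) + μ (y ++ [true]))
    (hξpos : ∀ y, 0 < μ y → 0 < ξ y) (x : List Bool) :
    μ x * instEnt μ ξ x
      = (∑ b : Bool, μ (x ++ [b]) * Real.log (μ (x ++ [b]) / ξ (x ++ [b])))
        - μ x * Real.log (μ x / ξ x) := by
  rcases eq_or_lt_of_le (hμnn x) with hx0 | hxp
  · have hch : ∀ b : Bool, μ (x ++ [b]) = 0 := by
      have h := hμadd x
      have hf := hμnn (x ++ [false]); have ht := hμnn (x ++ [true])
      intro b; cases b <;> linarith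
    simp [hch, ← hx0]
  · have hxξ := hξpos x hxp
    have hper : ∀ b : Bool,
        μ x * (condP μ x b * Real.log (condP μ x b / condP ξ x b))
          = μ (x ++ [b]) * Real.log (μ (x ++ [b]) / ξ (x ++ [b]))
            - μ (x ++ [b]) * Real.log (μ x / ξ x) := by
      intro b
      rcases eq_or_lt_of_le (hμnn (x ++ [b])) with hb0 | hbp
      · rw [condP, ← hb0]; simp
      · have hbξ := hξpos _ hbp
        have hc : μ x * condP μ x b = μ (x ++ [b]) := by
          rw [condP, mul_div_cancel₀ _ (ne_of_gt hxp)]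
        have hlog : Real.log (condP μ x b / condP ξ x b)
            = Real.log (μ (x ++ [b]) / ξ (x ++ [b])) - Real.log (μ x / ξ x) := by
          have e : condP μ x b / condP ξ x b
              = (μ (x ++ [b]) / ξ (x ++ [b])) / (μ x / ξ x) := by
            rw [condP, condP]
            field_simp
          rw [e, Real.log_div (ne_of_gt (div_pos hbp hbξ)) (ne_of_gt (div_pos hxp hxξ))]
        calc μ x * (condP μ x b * Real.log (condP μ x b / condP ξ x b))
            = (μ x * condP μ x b) * Real.log (condP μ x b / condP ξ x b) := by ring
          _ = μ (x ++ [b]) * (Real.log (μ (x ++ [b]) / ξ (x ++ [b]))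
                - Real.log (μ x / ξ x)) := by rw [hc, hlog]
          _ = _ := by ring
    rw [instEnt, Finset.mul_sum]
    rw [Finset.sum_congr rfl (fun b _ => hper b), Finset.sum_sub_distrib]
    congr 1
    rw [← Finset.sum_mul]
    congr 1
    rw [Fintype.sum_bool]
    linarith [hμadd x]

/-- Theorem 1(ii), mean-square convergence: the `μ`-expected
squared difference of the conditional probabilities of `ξ` and `μ = μs i₀`
at time `t` tends to `0` as `t → ∞`. -/
theorem convergence_in_mean_square {ι : Type*} [Countable ι]
    (μs : ι → List Bool → ℝ) (w : ι → ℝ)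
    (hμs : ∀ i, IsDistr (μs i)) (hw : ∀ i, 0 < w i) (hw1 : HasSum w 1)
    (ξ : List Bool → ℝ) (hξ : ∀ x, HasSum (fun i => w i * μs i x) (ξ x))
    (i₀ : ι) :
    Tendsto (fun t : ℕ => ∑ x : Fin t → Bool, ∑ b : Bool,
        μs i₀ (List.ofFn x) *
          (condP (μs i₀) (List.ofFn x) b - condP ξ (List.ofFn x) b) ^ 2)
      atTop (nhds 0) := by
  obtain ⟨hμnn, hμnil, hμadd⟩ := hμs i₀
  have hξnn : ∀ x, 0 ≤ ξ x := fun x =>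
    (hξ x).nonneg fun i => mul_nonneg (hw i).le ((hμs i).1 x)
  have hwle : ∀ x, w i₀ * μs i₀ x ≤ ξ x := fun x =>
    le_hasSum (hξ x) i₀ fun i _ => mul_nonneg (hw i).le ((hμs i).1 x)
  have hξpos : ∀ x, 0 < μs i₀ x → 0 < ξ x := fun x hx =>
    lt_of_lt_of_le (mul_pos (hw i₀) hx) (hwle x)
  have hξadd : ∀ x, ξ x = ξ (x ++ [false]) + ξ (x ++ [true]) := by
    intro x
    have h1 : HasSum (fun i => w i * μs i (x ++ [false]) + w i * μs i (x ++ [true]))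
        (ξ (x ++ [false]) + ξ (x ++ [true])) := (hξ _).add (hξ _)
    have h2 : (fun i => w i * μs i (x ++ [false]) + w i * μs i (x ++ [true]))
        = fun i => w i * μs i x := by
      funext i; rw [(hμs i).2.2 x]; ring
    rw [h2] at h1
    exact (hξ x).unique h1
  have hξnil : ξ [] = 1 := by
    have h1 : HasSum (fun i => w i * μs i []) 1 := by
      have h2 : (fun i => w i * μs i []) = w := by
        funext i; rw [(hμs i).2.1, mul_one]
      rw [h2]; exact hw1
    exact (hξ []).unique h1
  -- relative entropy at time n
  set D : ℕ → ℝ := fun n => ∑ x : Fin n → Bool,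
    μs i₀ (List.ofFn x) * Real.log (μs i₀ (List.ofFn x) / ξ (List.ofFn x)) with hD
  have hmass : ∀ n, ∑ x : Fin n → Bool, μs i₀ (List.ofFn x) = 1 := by
    intro n
    induction n with
    | zero => simp [hμnil]
    | succ n ih =>
      rw [sum_succ_eq n (fun y => μs i₀ y)]
      have hx : ∀ x : Fin n → Bool,
          (∑ b : Bool, μs i₀ (List.ofFn x ++ [b])) = μs i₀ (List.ofFn x) := by
        intro x; rw [Fintype.sum_bool]; linarith [hμadd (List.ofFn x)]
      rw [Finset.sum_congr rfl fun x _ => hx x, ih]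
  have hD0 : D 0 = 0 := by simp [hD, hμnil, hξnil]
  have htel : ∀ n, (∑ x : Fin n → Bool,
      μs i₀ (List.ofFn x) * instEnt (μs i₀) ξ (List.ofFn x)) = D (n + 1) - D n := by
    intro n
    have hsucc : D (n + 1) = ∑ x : Fin n → Bool, ∑ b : Bool,
        μs i₀ (List.ofFn x ++ [b]) *
          Real.log (μs i₀ (List.ofFn x ++ [b]) / ξ (List.ofFn x ++ [b])) :=
      sum_succ_eq n (fun y => μs i₀ y * Real.log (μs i₀ y / ξ y))
    rw [Finset.sum_congr rfl
      (fun x _ => step_eq (μs i₀) ξ hμnn hμadd hξpos (List.ofFn x))]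
    rw [Finset.sum_sub_distrib, ← hsucc]
  have hDle : ∀ n, D n ≤ -Real.log (w i₀) := by
    intro n
    have hterm : ∀ x : Fin n → Bool,
        μs i₀ (List.ofFn x) * Real.log (μs i₀ (List.ofFn x) / ξ (List.ofFn x))
          ≤ μs i₀ (List.ofFn x) * (-Real.log (w i₀)) := by
      intro x
      rcases eq_or_lt_of_le (hμnn (List.ofFn x)) with h0 | hp
      · rw [← h0]; simp
      · have hxp := hξpos _ hp
        apply mul_le_mul_of_nonneg_left _ (hμnn _)
        have hle : μs i₀ (List.ofFn x) / ξ (List.ofFn x) ≤ 1 / w i₀ := by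
          rw [div_le_div_iff₀ hxp (hw i₀)]
          calc μs i₀ (List.ofFn x) * w i₀ = w i₀ * μs i₀ (List.ofFn x) := by ring
            _ ≤ ξ (List.ofFn x) := hwle _
            _ = 1 * ξ (List.ofFn x) := by ring
        calc Real.log (μs i₀ (List.ofFn x) / ξ (List.ofFn x))
            ≤ Real.log (1 / w i₀) := Real.log_le_log (div_pos hp hxp) hle
          _ = -Real.log (w i₀) := by rw [one_div, Real.log_inv]
    calc D n ≤ ∑ x : Fin n → Bool, μs i₀ (List.ofFn x) * (-Real.log (w i₀)) :=
          Finset.sum_le_sum fun x _ => hterm x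
      _ = (∑ x : Fin n → Bool, μs i₀ (List.ofFn x)) * (-Real.log (w i₀)) := by
          rw [Finset.sum_mul]
      _ = -Real.log (w i₀) := by rw [hmass n, one_mul]
  -- the quantity of interest
  set a : ℕ → ℝ := fun t => ∑ x : Fin t → Bool, ∑ b : Bool,
      μs i₀ (List.ofFn x) *
        (condP (μs i₀) (List.ofFn x) b - condP ξ (List.ofFn x) b) ^ 2 with ha
  have hann : ∀ t, 0 ≤ a t := fun t =>
    Finset.sum_nonneg fun x _ => Finset.sum_nonneg fun b _ =>
      mul_nonneg (hμnn _) (sq_nonneg _)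
  have hab : ∀ t, a t ≤ 4 * ∑ x : Fin t → Bool,
      μs i₀ (List.ofFn x) * instEnt (μs i₀) ξ (List.ofFn x) := by
    intro t
    rw [ha, Finset.mul_sum]
    refine Finset.sum_le_sum fun x _ => ?_
    set y := List.ofFn x with hy
    rcases eq_or_lt_of_le (hμnn y) with h0 | hp
    · rw [← h0]; simp [instEnt]
    · have hyξ := hξpos _ hp
      have hps : condP (μs i₀) y false + condP (μs i₀) y true = 1 := by
        rw [condP, condP, ← add_div, ← hμadd y, div_self (ne_of_gt hp)]
      have hqs : condP ξ y false + condP ξ y true = 1 := by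
        rw [condP, condP, ← add_div, ← hξadd y, div_self (ne_of_gt hyξ)]
      have hpnn : ∀ b, 0 ≤ condP (μs i₀) y b := fun b =>
        div_nonneg (hμnn _) (hμnn _)
      have hqnn : ∀ b, 0 ≤ condP ξ y b := fun b =>
        div_nonneg (hξnn _) (hξnn _)
      have himp : ∀ b, 0 < condP (μs i₀) y b → 0 < condP ξ y b := by
        intro b hb
        rw [condP] at hb
        have hnum : 0 < μs i₀ (y ++ [b]) := by
          by_contra hcon
          push_neg at hcon
          have : μs i₀ (y ++ [b]) = 0 := le_antisymm hcon (hμnn _)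
          rw [this, zero_div] at hb
          exact lt_irrefl 0 hb
        exact div_pos (hξpos _ hnum) hyξ
      have hP := pinsker4 (hpnn false) (hpnn true) (hqnn false) (hqnn true)
        hps hqs (himp false) (himp true)
      calc ∑ b : Bool, μs i₀ y * (condP (μs i₀) y b - condP ξ y b) ^ 2
          = μs i₀ y * ((condP (μs i₀) y false - condP ξ y false) ^ 2
              + (condP (μs i₀) y true - condP ξ y true) ^ 2) := by
            rw [Fintype.sum_bool]; ring
        _ ≤ μs i₀ y * (4 * (condP (μs i₀) y false *
              Real.log (condP (μs i₀) y false / condP ξ y false)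
            + condP (μs i₀) y true *
              Real.log (condP (μs i₀) y true / condP ξ y true))) :=
            mul_le_mul_of_nonneg_left hP (hμnn y)
        _ = 4 * (μs i₀ y * instEnt (μs i₀) ξ y) := by
            rw [instEnt, Fintype.sum_bool]; ring
  have hbound : ∀ n, ∑ t ∈ Finset.range n, a t ≤ 4 * (-Real.log (w i₀)) := by
    intro n
    calc ∑ t ∈ Finset.range n, a t
        ≤ ∑ t ∈ Finset.range n, 4 * ∑ x : Fin t → Bool,
            μs i₀ (List.ofFn x) * instEnt (μs i₀) ξ (List.ofFn x) :=
          Finset.sum_le_sum fun t _ => hab t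
      _ = 4 * ∑ t ∈ Finset.range n, (D (t + 1) - D t) := by
          rw [Finset.mul_sum]
          exact Finset.sum_congr rfl fun t _ => by rw [htel t]
      _ = 4 * (D n - D 0) := by rw [Finset.sum_range_sub]
      _ = 4 * D n := by rw [hD0]; ring
      _ ≤ 4 * (-Real.log (w i₀)) := by linarith [hDle n]
  have hsummable : Summable a := summable_of_sum_range_le hann hbound
  exact hsummable.tendsto_atTop_zero
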